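/- Let G be a simple graph on a finite vertex type V with at least 3 vertices, let l : Sym2 V → ℕ assign a length to each edge, let E' be a finite set of edges of G, and let B be a natural number. Then the following are equivalent: (1) there exists a Hamiltonian cycle W of G whose edge list contains every edge of E' and whose total length ∑_{e ∈ W.edges} l(e) is at most B; (2) there exist a vertex u and a closed walk W : G.Walk u u such that the length of W equals Fintype.card V, every vertex of V appears in the support of W, every edge of E' appears in the edge list of W, and ∑_{e ∈ W.edges} l(e) ≤ B. -/

import Mathlib

/-- Correctness of the filtering strategy: a Hamiltonian cycle containing all
edges of `E'` of total length at most `B` exists iff there is a closed walk of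
length `Fintype.card V` visiting every vertex, using every edge of `E'`, and of
total length at most `B`. -/
theorem ruralPostman_iff_closed_walk_filter
    {V : Type*} [Fintype V] [DecidableEq V] (G : SimpleGraph V)
    (hV : 3 ≤ Fintype.card V)
    (l : Sym2 V → ℕ) (E' : Finset (Sym2 V)) (B : ℕ) :
    (∃ (u : V) (W : G.Walk u u), W.IsHamiltonianCycle ∧
        (∀ e ∈ E', e ∈ W.edges) ∧ (W.edges.map l).sum ≤ B) ↔
      (∃ (u : V) (W : G.Walk u u), W.length = Fintype.card V ∧
        (∀ v : V, v ∈ W.support) ∧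
        (∀ e ∈ E', e ∈ W.edges) ∧ (W.edges.map l).sum ≤ B) := by
  constructor
  · rintro ⟨u, W, hW, hE, hB⟩
    exact ⟨u, W, hW.length_eq, hW.mem_support, hE, hB⟩
  · rintro ⟨u, W, hlen, hsupp, hE, hB⟩
    have hn3 : 3 ≤ W.length := hlen ▸ hV
    have hnil : ¬ W.Nil := by
      rw [SimpleGraph.Walk.nil_iff_length_eq]
      omega
    -- every vertex is in the tail of the support
    have hmem : ∀ a : V, a ∈ W.support.tail := by
      intro a
      rw [← SimpleGraph.Walk.support_tail_of_not_nil W hnil]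
      rcases List.mem_cons.mp
          ((SimpleGraph.Walk.cons_support_tail (p := W) hnil) ▸ hsupp a) with h | h
      · exact h ▸ W.tail.end_mem_support
      · exact h
    have hlt : W.support.tail.length = Fintype.card V := by
      have := W.length_support
      have : W.support.tail.length = W.length := by
        cases hs : W.support with
        | nil => exact absurd hs W.support_ne_nil
        | cons x xs => simp [hs] at this ⊢; omega
      omega
    -- the tail of the support has no duplicates
    have hnodup : W.support.tail.Nodup := by
      have huniv : W.support.tail.toFinset = Finset.univ :=
        Finset.eq_univ_iff_forall.mpr (fun a => List.mem_toFinset.mpr (hmem a))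
      have hcard : W.support.tail.toFinset.card = W.support.tail.length := by
        rw [huniv, Finset.card_univ, hlt]
      rw [← Multiset.coe_nodup, ← Multiset.toFinset_card_eq_card_iff_nodup]
      simpa using hcard
    have hpath : W.tail.IsPath := by
      apply SimpleGraph.Walk.IsPath.mk'
      rw [SimpleGraph.Walk.support_tail_of_not_nil W hnil]
      exact hnodup
    have hlenp : W.tail.length + 1 = W.length := SimpleGraph.Walk.length_tail_add_one hnil
    have hadj : G.Adj u (W.getVert 1) := W.adj_snd hnil
    -- the first edge of W is not an edge of its tail
    have hne : s(u, W.getVert 1) ∉ W.tail.edges := by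
      intro he
      obtain ⟨x, h', q, hq⟩ :=
        SimpleGraph.Walk.exists_eq_cons_of_ne hadj.ne.symm W.tail
      rw [hq] at he hpath hlenp
      rcases List.mem_cons.mp he with h | h
      · have hx : x = u := by
          rcases Sym2.eq_iff.mp h with ⟨h1, _⟩ | ⟨h1, _⟩
          · exact absurd h1 hadj.ne
          · exact h1.symm
        subst hx
        have : q = SimpleGraph.Walk.nil :=
          (SimpleGraph.Walk.isPath_iff_eq_nil (p := q)).mp hpath.of_cons
        rw [this] at hlenp
        simp at hlenp
        omega
      · have : W.getVert 1 ∈ q.support :=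
          q.fst_mem_support_of_mem_edges (Sym2.eq_swap ▸ h)
        exact ((SimpleGraph.Walk.cons_isPath_iff h' q).mp hpath).2 this
    -- W is a Hamiltonian cycle
    have hcyc : W.IsCycle := by
      rw [← SimpleGraph.Walk.cons_tail_eq W hnil]
      exact (SimpleGraph.Walk.cons_isCycle_iff W.tail hadj).mpr ⟨hpath, hne⟩
    refine ⟨u, W, ⟨?_, hE, hB⟩⟩
    rw [SimpleGraph.Walk.isHamiltonianCycle_iff_isCycle_and_support_count_tail_eq_one]
    exact ⟨hcyc, fun a => List.count_eq_one_of_mem hnodup (hmem a)⟩
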